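/- Let f : ℝ → ℝ be bounded and regulated, and satisfy the no-jamming condition. Then for every x₀ ∈ ℝ there exists a Carathéodory solution x : [0,∞) → ℝ of the Cauchy problem ẋ = f(x), x(0) = x₀, defined for all times t ≥ 0; that is, there exists x with x(t) = x₀ + ∫₀ᵗ f(x(s)) ds for all t ≥ 0. -/

import Mathlib

open MeasureTheory Set Filter

/-- `f` is regulated with left limits `fl` and right limits `fr`. -/
def Regulated (f fl fr : ℝ → ℝ) : Prop :=
  ∀ y : ℝ,
    Filter.Tendsto f (nhdsWithin y (Set.Iio y)) (nhds (fl y)) ∧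
    Filter.Tendsto f (nhdsWithin y (Set.Ioi y)) (nhds (fr y))

/-- The no-jamming condition: if `f(y−)·f(y+) = 0` or `f(y−) > 0 > f(y+)`, then `f(y) = 0`. -/
def NoJamming (f fl fr : ℝ → ℝ) : Prop :=
  ∀ y : ℝ, (fl y * fr y = 0 ∨ (0 < fl y ∧ fr y < 0)) → f y = 0

lemma countable_of_forall_isolated {B : Set ℝ}
    (h : ∀ w ∈ B, ∃ ε > 0, ∀ v ∈ B, v ∈ Set.Ioo (w - ε) (w + ε) → v = w) :
    B.Countable := by
  have : DiscreteTopology ↥B := by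
    rw [discreteTopology_subtype_iff]
    intro w hw
    obtain ⟨ε, hε, hiso⟩ := h w hw
    rw [Filter.inf_principal_eq_bot]
    refine mem_nhdsWithin.2 ⟨Set.Ioo (w - ε) (w + ε), isOpen_Ioo, ?_, ?_⟩
    · constructor <;> linarith
    · rintro v ⟨hv1, hv2⟩ hv3
      exact hv2 (hiso v hv3 hv1)
  have : Countable ↥B := TopologicalSpace.separableSpace_iff_countable.1 inferInstance
  exact Set.countable_coe_iff.1 this

lemma dist_limit_le (f : ℝ → ℝ) {L c : ℝ} {s : Set ℝ} [(nhdsWithin c s).NeBot]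
    (hf : Tendsto f (nhdsWithin c s) (nhds L)) {U : Set ℝ} (hU : U ∈ nhdsWithin c s) {a ε : ℝ}
    (hbd : ∀ z ∈ U, dist (f z) a ≤ ε) : dist L a ≤ ε :=
  le_of_tendsto (hf.dist tendsto_const_nhds) (eventually_of_mem hU hbd)

lemma regulated_countable_bad (f fl fr : ℝ → ℝ) (hreg : Regulated f fl fr) :
    {y : ℝ | f y ≠ fl y ∨ f y ≠ fr y}.Countable := by
  have key : ∀ ε : ℝ, 0 < ε →
      {y : ℝ | ε ≤ |f y - fl y| ∨ ε ≤ |f y - fr y|}.Countable := by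
    intro ε hε
    apply countable_of_forall_isolated
    intro w _
    obtain ⟨δ₁, hδ₁, h1⟩ := Metric.tendsto_nhdsWithin_nhds.1 (hreg w).1 (ε/3) (by linarith)
    obtain ⟨δ₂, hδ₂, h2⟩ := Metric.tendsto_nhdsWithin_nhds.1 (hreg w).2 (ε/3) (by linarith)
    refine ⟨min δ₁ δ₂, lt_min hδ₁ hδ₂, fun v hv hv' => ?_⟩
    by_contra hne
    rcases lt_or_gt_of_ne hne with hlt | hgt
    · -- v < w, v > w - δ₁
      have hvl : w - δ₁ < v := by
        have := hv'.1; have := min_le_left δ₁ δ₂; linarith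
      have hIoo : ∀ z ∈ Ioo (w - δ₁) w, dist (f z) (fl w) ≤ ε/3 := by
        intro z hz
        exact le_of_lt (h1 hz.2 (by rw [Real.dist_eq, abs_lt]; constructor <;> [linarith [hz.1]; linarith [hz.2]]))
      have hm1 : Ioo (w - δ₁) w ∈ nhdsWithin v (Set.Iio v) := by
        refine mem_nhdsWithin.2 ⟨Set.Ioi (w - δ₁), isOpen_Ioi, hvl, ?_⟩
        rintro z ⟨hz1, hz2⟩; exact ⟨hz1, lt_trans hz2 hlt⟩
      have hm2 : Ioo (w - δ₁) w ∈ nhdsWithin v (Set.Ioi v) := by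
        refine mem_nhdsWithin.2 ⟨Set.Iio w, isOpen_Iio, hlt, ?_⟩
        rintro z ⟨hz1, hz2⟩; exact ⟨lt_trans hvl hz2, hz1⟩
      have e1 : dist (fl v) (fl w) ≤ ε/3 := dist_limit_le f (hreg v).1 hm1 hIoo
      have e2 : dist (fr v) (fl w) ≤ ε/3 := dist_limit_le f (hreg v).2 hm2 hIoo
      have e3 : dist (f v) (fl w) ≤ ε/3 := hIoo v ⟨hvl, hlt⟩
      simp only [Real.dist_eq] at e1 e2 e3
      have c1 := abs_sub_comm (fl w) (fl v)
      have c2 := abs_sub_comm (fl w) (fr v)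
      have d1 : |f v - fl v| < ε := by
        have := abs_sub_le (f v) (fl w) (fl v); linarith
      have d2 : |f v - fr v| < ε := by
        have := abs_sub_le (f v) (fl w) (fr v); linarith
      rcases hv with h | h <;> linarith
    · -- w < v, v < w + δ₂
      have hvl : v < w + δ₂ := by
        have := hv'.2; have := min_le_right δ₁ δ₂; linarith
      have hIoo : ∀ z ∈ Ioo w (w + δ₂), dist (f z) (fr w) ≤ ε/3 := by
        intro z hz
        exact le_of_lt (h2 hz.1 (by rw [Real.dist_eq, abs_lt]; constructor <;> [linarith [hz.1]; linarith [hz.2]]))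
      have hm1 : Ioo w (w + δ₂) ∈ nhdsWithin v (Set.Iio v) := by
        refine mem_nhdsWithin.2 ⟨Set.Ioi w, isOpen_Ioi, hgt, ?_⟩
        rintro z ⟨hz1, hz2⟩; exact ⟨hz1, lt_trans hz2 hvl⟩
      have hm2 : Ioo w (w + δ₂) ∈ nhdsWithin v (Set.Ioi v) := by
        refine mem_nhdsWithin.2 ⟨Set.Iio (w + δ₂), isOpen_Iio, hvl, ?_⟩
        rintro z ⟨hz1, hz2⟩; exact ⟨lt_trans hgt hz2, hz1⟩
      have e1 : dist (fl v) (fr w) ≤ ε/3 := dist_limit_le f (hreg v).1 hm1 hIoo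
      have e2 : dist (fr v) (fr w) ≤ ε/3 := dist_limit_le f (hreg v).2 hm2 hIoo
      have e3 : dist (f v) (fr w) ≤ ε/3 := hIoo v ⟨hgt, hvl⟩
      simp only [Real.dist_eq] at e1 e2 e3
      have c1 := abs_sub_comm (fr w) (fl v)
      have c2 := abs_sub_comm (fr w) (fr v)
      have d1 : |f v - fl v| < ε := by
        have := abs_sub_le (f v) (fr w) (fl v); linarith
      have d2 : |f v - fr v| < ε := by
        have := abs_sub_le (f v) (fr w) (fr v); linarith
      rcases hv with h | h <;> linarith
  have hsub : {y : ℝ | f y ≠ fl y ∨ f y ≠ fr y} ⊆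
      ⋃ n : ℕ, {y : ℝ | 1/(n+1) ≤ |f y - fl y| ∨ 1/(n+1) ≤ |f y - fr y|} := by
    intro y hy
    have hpos : 0 < max |f y - fl y| |f y - fr y| := by
      rcases hy with h | h
      · exact lt_max_of_lt_left (abs_pos.2 (sub_ne_zero.2 h))
      · exact lt_max_of_lt_right (abs_pos.2 (sub_ne_zero.2 h))
    obtain ⟨n, hn⟩ := exists_nat_one_div_lt hpos
    refine Set.mem_iUnion.2 ⟨n, ?_⟩
    rcases le_max_iff.1 (le_of_lt hn) with h | h
    · exact Or.inl (by exact_mod_cast h)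
    · exact Or.inr (by exact_mod_cast h)
  exact Set.Countable.mono hsub (Set.countable_iUnion fun n => key _ (by positivity))

namespace Cara

open scoped ENNReal NNReal

noncomputable section

variable (f fl fr : ℝ → ℝ) (M x₀ : ℝ)

def A : Set ℝ := {z | x₀ < z ∧ ∀ w, x₀ < w → w < z → 0 < fl w ∧ 0 < fr w}

def T (y : ℝ) : ℝ≥0∞ := ∫⁻ z in Set.Ioc x₀ y, ENNReal.ofReal (f z)⁻¹

def sol (t : ℝ) : ℝ :=
  sSup (insert x₀ {y | y ∈ A fl fr x₀ ∧ T f x₀ y ≤ ENNReal.ofReal t})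

variable {f fl fr M x₀}

lemma T_add {c d : ℝ} (hc : x₀ ≤ c) (hcd : c ≤ d) :
    T f x₀ d = T f x₀ c + ∫⁻ z in Set.Ioc c d, ENNReal.ofReal (f z)⁻¹ := by
  rw [T, T, ← lintegral_union measurableSet_Ioc (Set.Ioc_disjoint_Ioc_of_le le_rfl),
    Set.Ioc_union_Ioc_eq_Ioc hc hcd]

lemma T_mono {c d : ℝ} (hcd : c ≤ d) : T f x₀ c ≤ T f x₀ d :=
  lintegral_mono_set (Set.Ioc_subset_Ioc_right hcd)

lemma lint_ub {c d lo : ℝ} (hcd : c ≤ d) (hlo : 0 < lo)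
    (hae : ∀ᵐ z ∂(volume.restrict (Set.Ioc c d)), lo ≤ f z) :
    ∫⁻ z in Set.Ioc c d, ENNReal.ofReal (f z)⁻¹ ≤ ENNReal.ofReal ((d - c) / lo) := by
  have h1 : ∫⁻ z in Set.Ioc c d, ENNReal.ofReal (f z)⁻¹
      ≤ ∫⁻ _ in Set.Ioc c d, ENNReal.ofReal lo⁻¹ := by
    refine lintegral_mono_ae (hae.mono fun z hz => ?_)
    exact ENNReal.ofReal_le_ofReal (inv_anti₀ hlo hz)
  rw [setLIntegral_const, Real.volume_Ioc, ← ENNReal.ofReal_mul (by positivity)] at h1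
  refine h1.trans (le_of_eq ?_)
  rw [div_eq_mul_inv, mul_comm]

lemma lint_lb {c d hi : ℝ} (hhi : 0 < hi)
    (hae : ∀ᵐ z ∂(volume.restrict (Set.Ioc c d)), 0 < f z ∧ f z ≤ hi) :
    ENNReal.ofReal ((d - c) / hi) ≤ ∫⁻ z in Set.Ioc c d, ENNReal.ofReal (f z)⁻¹ := by
  rcases le_or_gt d c with h | h
  · have : (d - c) / hi ≤ 0 := by
      apply div_nonpos_of_nonpos_of_nonneg <;> linarith
    simp [ENNReal.ofReal_eq_zero.2 this]
  have h1 : ∫⁻ _ in Set.Ioc c d, ENNReal.ofReal hi⁻¹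
      ≤ ∫⁻ z in Set.Ioc c d, ENNReal.ofReal (f z)⁻¹ := by
    refine lintegral_mono_ae (hae.mono fun z hz => ?_)
    exact ENNReal.ofReal_le_ofReal (inv_anti₀ hz.1 hz.2)
  rw [setLIntegral_const, Real.volume_Ioc, ← ENNReal.ofReal_mul (by positivity)] at h1
  refine le_trans (le_of_eq ?_) h1
  rw [div_eq_mul_inv, mul_comm]

lemma limits_ge_of_interval {a b lo : ℝ} (hreg : Regulated f fl fr)
    (h : ∀ z ∈ Set.Ioo a b, lo ≤ f z) {w : ℝ} (hw : w ∈ Set.Ioo a b) :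
    lo ≤ fl w ∧ lo ≤ fr w := by
  constructor
  · refine ge_of_tendsto (hreg w).1 ?_
    filter_upwards [mem_nhdsWithin.2 ⟨Set.Ioi a, isOpen_Ioi, hw.1,
      fun z hz => (⟨hz.1, lt_trans hz.2 hw.2⟩ : z ∈ Set.Ioo a b)⟩] with z hz
    exact h z hz
  · refine ge_of_tendsto (hreg w).2 ?_
    filter_upwards [mem_nhdsWithin.2 ⟨Set.Iio b, isOpen_Iio, hw.2,
      fun z hz => (⟨lt_trans hw.1 hz.2, hz.1⟩ : z ∈ Set.Ioo a b)⟩] with z hz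
    exact h z hz

lemma mem_A_of_le {z z' : ℝ} (hz : z ∈ A fl fr x₀) (h1 : x₀ < z') (h2 : z' ≤ z) :
    z' ∈ A fl fr x₀ :=
  ⟨h1, fun w hw1 hw2 => hz.2 w hw1 (lt_of_lt_of_le hw2 h2)⟩

lemma exists_init (hreg : Regulated f fl fr) (hpos : 0 < fr x₀) :
    ∃ δ > 0, x₀ + δ ∈ A fl fr x₀ ∧ ∀ z ∈ Set.Ioo x₀ (x₀ + δ), fr x₀ / 2 ≤ f z := by
  obtain ⟨δ, hδ, hδ'⟩ := Metric.tendsto_nhdsWithin_nhds.1 (hreg x₀).2 (fr x₀ / 2)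
    (by linarith)
  have hf : ∀ z ∈ Set.Ioo x₀ (x₀ + δ), fr x₀ / 2 ≤ f z := by
    intro z hz
    have := hδ' hz.1 (by rw [Real.dist_eq, abs_lt]; constructor <;>
      [linarith [hz.1]; linarith [hz.2]])
    rw [Real.dist_eq, abs_lt] at this
    linarith [this.2]
  refine ⟨δ, hδ, ⟨by linarith, fun w hw1 hw2 => ?_⟩, hf⟩
  have hl := limits_ge_of_interval hreg hf ⟨hw1, hw2⟩
  constructor <;> [linarith [hl.1]; linarith [hl.2]]

lemma pos_off_countable (hreg : Regulated f fl fr) (hnj : NoJamming f fl fr) {z : ℝ}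
    (hz : z ∈ A fl fr x₀) :
    ∃ B : Set ℝ, B.Countable ∧ ∀ w ∈ Set.Ioo x₀ z, w ∉ B → 0 < f w := by
  refine ⟨{w | w ∈ Set.Ioo x₀ z ∧ f w ≤ 0}, ?_, fun w hw hw' => ?_⟩
  · apply countable_of_forall_isolated
    rintro w ⟨hw, _⟩
    obtain ⟨hlw, hrw⟩ := hz.2 w hw.1 hw.2
    obtain ⟨δ₁, hδ₁, h1⟩ := Metric.tendsto_nhdsWithin_nhds.1 (hreg w).1 (fl w) hlw
    obtain ⟨δ₂, hδ₂, h2⟩ := Metric.tendsto_nhdsWithin_nhds.1 (hreg w).2 (fr w) hrw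
    refine ⟨min δ₁ δ₂, lt_min hδ₁ hδ₂, ?_⟩
    rintro v ⟨hv, hv0⟩ hv'
    by_contra hne
    have hpos : 0 < f v := by
      rcases lt_or_gt_of_ne hne with hlt | hgt
      · have := h1 hlt (by rw [Real.dist_eq, abs_lt]; constructor <;>
          [linarith [hv'.1, min_le_left δ₁ δ₂]; linarith [hv'.2]])
        rw [Real.dist_eq, abs_lt] at this
        linarith [this.1]
      · have := h2 hgt (by rw [Real.dist_eq, abs_lt]; constructor <;>
          [linarith [hv'.1]; linarith [hv'.2, min_le_right δ₁ δ₂]])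
        rw [Real.dist_eq, abs_lt] at this
        linarith [this.1]
    linarith
  · by_contra hle
    push_neg at hle
    exact hw' ⟨hw, hle⟩

lemma ae_pos_of_subset (hb : ∀ y, |f y| ≤ M) (hreg : Regulated f fl fr)
    (hnj : NoJamming f fl fr) {z c d : ℝ}
    (hz : z ∈ A fl fr x₀) (hc : x₀ ≤ c) (hd : d ≤ z) :
    ∀ᵐ w ∂(volume.restrict (Set.Ioc c d)), 0 < f w ∧ f w ≤ M := by
  obtain ⟨B, hBc, hB⟩ := pos_off_countable hreg hnj hz
  have hnull : volume (B ∪ {z}) = 0 :=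
    measure_union_null (hBc.measure_zero volume) (measure_singleton z)
  have h1 : ∀ᵐ w ∂volume, w ∉ B ∪ {z} :=
    MeasureTheory.measure_eq_zero_iff_ae_notMem.1 hnull
  filter_upwards [MeasureTheory.ae_restrict_mem measurableSet_Ioc,
    MeasureTheory.ae_restrict_of_ae h1] with w hw hw'
  have hwz : w < z := by
    rcases lt_or_eq_of_le (le_trans hw.2 hd) with h | h
    · exact h
    · exact absurd (Or.inr h) hw'
  refine ⟨hB w ⟨lt_of_le_of_lt hc hw.1, hwz⟩ (fun hwB => hw' (Or.inl hwB)),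
    le_of_abs_le (hb w)⟩

lemma T_lb (hb : ∀ y, |f y| ≤ M) (hreg : Regulated f fl fr) (hnj : NoJamming f fl fr)
    (hM : 0 < M) {z c d : ℝ} (hz : z ∈ A fl fr x₀) (hc : x₀ ≤ c) (hd : d ≤ z) :
    ENNReal.ofReal ((d - c) / M) ≤ ∫⁻ w in Set.Ioc c d, ENNReal.ofReal (f w)⁻¹ :=
  lint_lb hM (ae_pos_of_subset hb hreg hnj hz hc hd)

lemma M_pos (hb : ∀ y, |f y| ≤ M) (hreg : Regulated f fl fr) (hpos : 0 < fr x₀) :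
    0 < M := by
  obtain ⟨δ, hδ, _, hf⟩ := exists_init hreg hpos
  have hmem : x₀ + δ / 2 ∈ Set.Ioo x₀ (x₀ + δ) := by constructor <;> linarith
  have := hf _ hmem
  have := le_of_abs_le (hb (x₀ + δ / 2))
  linarith

variable (f fl fr x₀) in
def St (t : ℝ) : Set ℝ :=
  insert x₀ {y | y ∈ A fl fr x₀ ∧ T f x₀ y ≤ ENNReal.ofReal t}

variable (f fl fr x₀) in
lemma sol_def (t : ℝ) : sol f fl fr x₀ t = sSup (St f fl fr x₀ t) := rfl

section Main

variable (hb : ∀ y, |f y| ≤ M) (hreg : Regulated f fl fr) (hnj : NoJamming f fl fr)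
  (hpos : 0 < fr x₀)

include hb hreg hnj hpos

lemma St_bddAbove (t : ℝ) : BddAbove (St f fl fr x₀ t) := by
  have hM := M_pos hb hreg hpos
  refine ⟨x₀ + M * max t 0, ?_⟩
  rintro y (rfl | ⟨hy, hT⟩)
  · nlinarith [le_max_right t 0]
  · have h1 := (T_lb hb hreg hnj hM hy le_rfl le_rfl).trans hT
    have h2 : ENNReal.ofReal ((y - x₀) / M) ≤ ENNReal.ofReal (max t 0) :=
      h1.trans (ENNReal.ofReal_le_ofReal (le_max_left t 0))
    rw [ENNReal.ofReal_le_ofReal_iff (le_max_right t 0)] at h2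
    rw [div_le_iff₀ hM] at h2
    linarith

lemma mem_le_sol {t y : ℝ} (hy : y ∈ A fl fr x₀) (hT : T f x₀ y ≤ ENNReal.ofReal t) :
    y ≤ sol f fl fr x₀ t :=
  le_csSup (St_bddAbove hb hreg hnj hpos t) (Set.mem_insert_of_mem _ ⟨hy, hT⟩)

lemma sol_ge (t : ℝ) : x₀ ≤ sol f fl fr x₀ t :=
  le_csSup (St_bddAbove hb hreg hnj hpos t) (Set.mem_insert _ _)

lemma sol_mono {t t' : ℝ} (h : t ≤ t') : sol f fl fr x₀ t ≤ sol f fl fr x₀ t' := by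
  refine csSup_le_csSup (St_bddAbove hb hreg hnj hpos t') ⟨x₀, Set.mem_insert _ _⟩ ?_
  rintro y (rfl | ⟨hy, hT⟩)
  · exact Set.mem_insert _ _
  · exact Set.mem_insert_of_mem _ ⟨hy, hT.trans (ENNReal.ofReal_le_ofReal h)⟩

lemma sol_le {t c : ℝ} (h : x₀ ≤ c)
    (h2 : ∀ y, y ∈ A fl fr x₀ → T f x₀ y ≤ ENNReal.ofReal t → y ≤ c) :
    sol f fl fr x₀ t ≤ c := by
  refine csSup_le ⟨x₀, Set.mem_insert _ _⟩ ?_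
  rintro y (rfl | ⟨hy, hT⟩)
  · exact h
  · exact h2 y hy hT

lemma lt_sol_iff {t c : ℝ} (hc : x₀ ≤ c) :
    c < sol f fl fr x₀ t ↔ ∃ y, y ∈ A fl fr x₀ ∧ T f x₀ y ≤ ENNReal.ofReal t ∧ c < y := by
  constructor
  · intro h
    obtain ⟨y, hy, hcy⟩ := exists_lt_of_lt_csSup ⟨x₀, Set.mem_insert _ _⟩ h
    rcases hy with rfl | ⟨hy, hT⟩
    · exact absurd hcy (not_lt.2 hc)
    · exact ⟨y, hy, hT, hcy⟩
  · rintro ⟨y, hy, hT, hcy⟩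
    exact lt_of_lt_of_le hcy (mem_le_sol hb hreg hnj hpos hy hT)

lemma sol_nonpos {t : ℝ} (ht : t ≤ 0) : sol f fl fr x₀ t = x₀ := by
  have hM := M_pos hb hreg hpos
  refine le_antisymm (sol_le hb hreg hnj hpos le_rfl fun y hy hT => ?_)
    (sol_ge hb hreg hnj hpos t)
  exfalso
  have h0 : ENNReal.ofReal t = 0 := ENNReal.ofReal_eq_zero.2 ht
  rw [h0, le_zero_iff] at hT
  have h1 := (T_lb hb hreg hnj hM hy le_rfl le_rfl).trans hT.le
  rw [le_zero_iff, ENNReal.ofReal_eq_zero, div_nonpos_iff] at h1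
  rcases h1 with ⟨h1, h2⟩ | ⟨h1, _⟩
  · linarith
  · linarith [hy.1]

lemma sol_pos {t : ℝ} (ht : 0 < t) : x₀ < sol f fl fr x₀ t := by
  obtain ⟨δ, hδ, hδA, hf⟩ := exists_init hreg hpos
  set q : ℝ := min (δ / 2) (t * (fr x₀ / 2)) with hq
  have hq0 : 0 < q := lt_min (by linarith) (by positivity)
  have hqδ : q < δ := lt_of_le_of_lt (min_le_left _ _) (by linarith)
  have hyA : x₀ + q ∈ A fl fr x₀ := mem_A_of_le hδA (by linarith) (by linarith)
  have hae : ∀ᵐ z ∂(volume.restrict (Set.Ioc x₀ (x₀ + q))), fr x₀ / 2 ≤ f z := by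
    have h1 : ∀ᵐ z ∂volume, z ≠ x₀ + q :=
      MeasureTheory.measure_eq_zero_iff_ae_notMem.1 (measure_singleton (x₀ + q))
    filter_upwards [MeasureTheory.ae_restrict_mem measurableSet_Ioc,
      MeasureTheory.ae_restrict_of_ae h1] with z hz hz'
    exact hf z ⟨hz.1, lt_of_lt_of_le (lt_of_le_of_ne hz.2 hz') (by linarith)⟩
  have hub : T f x₀ (x₀ + q) ≤ ENNReal.ofReal t := by
    refine (lint_ub (by linarith) (by linarith) hae).trans (ENNReal.ofReal_le_ofReal ?_)
    rw [add_sub_cancel_left, div_le_iff₀ (by linarith)]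
    calc q ≤ t * (fr x₀ / 2) := min_le_right _ _
      _ = t * (fr x₀ / 2) := rfl
  have := mem_le_sol hb hreg hnj hpos hyA hub
  linarith

lemma near_sol {t η : ℝ} (h : x₀ < sol f fl fr x₀ t) (hη : 0 < η) :
    ∃ y, y ∈ A fl fr x₀ ∧ T f x₀ y ≤ ENNReal.ofReal t ∧
      sol f fl fr x₀ t - η < y ∧ y ≤ sol f fl fr x₀ t := by
  have hc : x₀ ≤ max x₀ (sol f fl fr x₀ t - η) := le_max_left _ _
  have hlt : max x₀ (sol f fl fr x₀ t - η) < sol f fl fr x₀ t :=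
    max_lt h (by linarith)
  obtain ⟨y, hy, hT, hcy⟩ := (lt_sol_iff hb hreg hnj hpos hc).1 hlt
  exact ⟨y, hy, hT, lt_of_le_of_lt (le_max_right _ _) hcy,
    mem_le_sol hb hreg hnj hpos hy hT⟩

end Main

lemma ae_ne (p : ℝ) : ∀ᵐ z ∂(volume : Measure ℝ), z ≠ p := by
  have := MeasureTheory.measure_eq_zero_iff_ae_notMem.1 (measure_singleton (μ := volume) p)
  simpa using this

lemma right_bound (hreg : Regulated f fl fr) {w : ℝ} (h : 0 < fr w) :
    ∃ δ > 0, ∀ z ∈ Set.Ioo w (w + δ), fr w / 2 ≤ f z := by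
  obtain ⟨δ, hδ, hδ'⟩ := Metric.tendsto_nhdsWithin_nhds.1 (hreg w).2 (fr w / 2) (by linarith)
  refine ⟨δ, hδ, fun z hz => ?_⟩
  have := hδ' hz.1 (by rw [Real.dist_eq, abs_lt]; constructor <;>
    [linarith [hz.1]; linarith [hz.2]])
  rw [Real.dist_eq, abs_lt] at this
  linarith [this.2]

lemma left_bound (hreg : Regulated f fl fr) {w : ℝ} (h : 0 < fl w) :
    ∃ δ > 0, ∀ z ∈ Set.Ioo (w - δ) w, fl w / 2 ≤ f z := by
  obtain ⟨δ, hδ, hδ'⟩ := Metric.tendsto_nhdsWithin_nhds.1 (hreg w).1 (fl w / 2) (by linarith)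
  refine ⟨δ, hδ, fun z hz => ?_⟩
  have := hδ' hz.2 (by rw [Real.dist_eq, abs_lt]; constructor <;>
    [linarith [hz.1]; linarith [hz.2]])
  rw [Real.dist_eq, abs_lt] at this
  linarith [this.2]

section Main2

variable (hb : ∀ y, |f y| ≤ M) (hreg : Regulated f fl fr) (hnj : NoJamming f fl fr)
  (hpos : 0 < fr x₀)

include hb hreg hnj hpos

lemma T_sol_ge {s : ℝ} (hs : 0 < s)
    (hz : ∃ z ∈ A fl fr x₀, sol f fl fr x₀ s < z) :
    ENNReal.ofReal s ≤ T f x₀ (sol f fl fr x₀ s) := by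
  obtain ⟨z, hzA, hyz⟩ := hz
  set y := sol f fl fr x₀ s with hy
  have hxy : x₀ < y := sol_pos hb hreg hnj hpos hs
  have hfr : 0 < fr y := (hzA.2 y hxy hyz).2
  obtain ⟨δ, hδ, hδ'⟩ := right_bound hreg hfr
  by_contra hcon
  push_neg at hcon
  have hfin : T f x₀ y ≠ ⊤ := ne_top_of_lt hcon
  set a := (T f x₀ y).toReal with ha
  have haa : T f x₀ y = ENNReal.ofReal a := (ENNReal.ofReal_toReal hfin).symm
  have has : a < s := by
    rw [haa, ENNReal.ofReal_lt_ofReal_iff hs] at hcon; exact hcon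
  set c : ℝ := fr y / 2 with hc
  have hc0 : 0 < c := by positivity
  set y' : ℝ := min ((y + z) / 2) (min (y + δ / 2) (y + (s - a) * c / 2)) with hy'
  have hy'1 : y < y' := by
    apply lt_min (by linarith) (lt_min (by linarith) (by nlinarith))
  have hy'2 : y' < z := lt_of_le_of_lt (min_le_left _ _) (by linarith)
  have hy'A : y' ∈ A fl fr x₀ := mem_A_of_le hzA (by linarith) (le_of_lt hy'2)
  have hy'δ : y' < y + δ := lt_of_le_of_lt ((min_le_right _ _).trans (min_le_left _ _)) (by linarith)
  have hae : ∀ᵐ w ∂(volume.restrict (Set.Ioc y y')), c ≤ f w := by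
    filter_upwards [MeasureTheory.ae_restrict_mem measurableSet_Ioc,
      MeasureTheory.ae_restrict_of_ae (ae_ne y')] with w hw hw'
    exact hδ' w ⟨hw.1, lt_of_lt_of_le (lt_of_le_of_ne hw.2 hw') (le_of_lt hy'δ)⟩
  have hT' : T f x₀ y' ≤ ENNReal.ofReal s := by
    rw [T_add (le_of_lt hxy) (le_of_lt hy'1), haa]
    refine le_trans (add_le_add_right (lint_ub (le_of_lt hy'1) hc0 hae) _) ?_
    rw [← ENNReal.ofReal_add ENNReal.toReal_nonneg (div_nonneg (by linarith) hc0.le)]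
    apply ENNReal.ofReal_le_ofReal
    have h1 : y' - y ≤ (s - a) * c / 2 :=
      sub_le_iff_le_add'.2 ((min_le_right _ _).trans (min_le_right _ _))
    have h2 : (y' - y) / c ≤ (s - a) / 2 := by
      rw [div_le_iff₀ hc0]
      calc y' - y ≤ (s - a) * c / 2 := h1
        _ = (s - a) / 2 * c := by ring
    linarith
  have := mem_le_sol hb hreg hnj hpos hy'A hT'
  rw [← hy] at this
  linarith

lemma sol_lipschitz {s s' : ℝ} (hs : 0 ≤ s) (hss' : s ≤ s') :
    sol f fl fr x₀ s' ≤ sol f fl fr x₀ s + M * (s' - s) := by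
  have hM := M_pos hb hreg hpos
  have hxs := sol_ge hb hreg hnj hpos s
  refine sol_le hb hreg hnj hpos
    (by nlinarith [mul_nonneg hM.le (sub_nonneg.2 hss')]) (fun y' hy' hT' => ?_)
  rcases le_or_gt y' (sol f fl fr x₀ s) with h | h
  · nlinarith
  rcases eq_or_lt_of_le hs with rfl | hs0
  · -- s = 0
    have h0 : sol f fl fr x₀ 0 = x₀ := sol_nonpos hb hreg hnj hpos le_rfl
    have h1 := (T_lb hb hreg hnj hM hy' le_rfl le_rfl).trans hT'
    rw [ENNReal.ofReal_le_ofReal_iff (by linarith)] at h1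
    rw [div_le_iff₀ hM] at h1
    rw [h0]
    nlinarith
  by_cases hst : ∃ z ∈ A fl fr x₀, sol f fl fr x₀ s < z
  · have hTy : ENNReal.ofReal s ≤ T f x₀ (sol f fl fr x₀ s) :=
      T_sol_ge hb hreg hnj hpos hs0 hst
    have hTadd : T f x₀ y' = T f x₀ (sol f fl fr x₀ s) +
        ∫⁻ w in Set.Ioc (sol f fl fr x₀ s) y', ENNReal.ofReal (f w)⁻¹ :=
      T_add hxs (le_of_lt h)
    have hlb := T_lb hb hreg hnj hM hy' hxs le_rfl
      (c := sol f fl fr x₀ s) (d := y')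
    have : ENNReal.ofReal (s + (y' - sol f fl fr x₀ s) / M) ≤ ENNReal.ofReal s' := by
      rw [ENNReal.ofReal_add (le_of_lt hs0) (div_nonneg (by linarith) hM.le)]
      calc ENNReal.ofReal s + ENNReal.ofReal ((y' - sol f fl fr x₀ s) / M)
          ≤ T f x₀ (sol f fl fr x₀ s) +
            ∫⁻ w in Set.Ioc (sol f fl fr x₀ s) y', ENNReal.ofReal (f w)⁻¹ :=
            add_le_add hTy hlb
        _ = T f x₀ y' := hTadd.symm
        _ ≤ ENNReal.ofReal s' := hT'
    rw [ENNReal.ofReal_le_ofReal_iff (by linarith)] at this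
    have h2 : (y' - sol f fl fr x₀ s) / M ≤ s' - s := by linarith
    rw [div_le_iff₀ hM] at h2
    nlinarith
  · push_neg at hst
    exact absurd (hst y' hy') (not_le.2 h)

lemma sol_lt_sol {s s' : ℝ} (hs : 0 < s) (hss' : s < s')
    (hz : ∃ z ∈ A fl fr x₀, sol f fl fr x₀ s < z) :
    sol f fl fr x₀ s < sol f fl fr x₀ s' := by
  obtain ⟨z, hzA, hyz⟩ := hz
  set y := sol f fl fr x₀ s with hy
  have hxy : x₀ < y := sol_pos hb hreg hnj hpos hs
  obtain ⟨hfl, hfr⟩ := hzA.2 y hxy hyz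
  obtain ⟨δL, hδL, hL⟩ := left_bound hreg hfl
  obtain ⟨δR, hδR, hR⟩ := right_bound hreg hfr
  set c : ℝ := min (fl y / 2) (fr y / 2) with hcdef
  have hc0 : 0 < c := lt_min (by positivity) (by positivity)
  set η : ℝ := min (min (δL / 2) ((y - x₀) / 2)) (c * (s' - s) / 4) with hη
  have hη0 : 0 < η := lt_min (lt_min (by linarith) (by linarith))
    (by have := mul_pos hc0 (sub_pos.2 hss'); linarith)
  obtain ⟨y₁, hy₁A, hTy₁, hy₁l, hy₁u⟩ := near_sol hb hreg hnj hpos (t := s) hxy hη0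
  set y₂ : ℝ := min ((y + z) / 2) (min (y + δR / 2) (y + c * (s' - s) / 4)) with hy₂
  have hy₂1 : y < y₂ := lt_min (by linarith) (lt_min (by linarith)
    (by have := mul_pos hc0 (sub_pos.2 hss'); linarith))
  have hy₂z : y₂ ≤ (y + z) / 2 := min_le_left _ _
  have hy₂A : y₂ ∈ A fl fr x₀ := mem_A_of_le hzA (by linarith) (by linarith)
  have hy₂δ : y₂ < y + δR := lt_of_le_of_lt ((min_le_right _ _).trans (min_le_left _ _)) (by linarith)
  have hae : ∀ᵐ w ∂(volume.restrict (Set.Ioc y₁ y₂)), c ≤ f w := by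
    filter_upwards [MeasureTheory.ae_restrict_mem measurableSet_Ioc,
      MeasureTheory.ae_restrict_of_ae (ae_ne y₂),
      MeasureTheory.ae_restrict_of_ae (ae_ne y)] with w hw hw2 hwy
    rcases lt_trichotomy w y with hlt | heq | hgt
    · refine le_trans (min_le_left _ _) (hL w ⟨?_, hlt⟩)
      have : y - δL / 2 < y₁ := by
        have := min_le_left (min (δL / 2) ((y - x₀) / 2)) (c * (s' - s) / 4)
        have := min_le_left (δL / 2) ((y - x₀) / 2)
        simp only [hη] at hy₁l
        linarith [le_trans (min_le_left (min (δL / 2) ((y - x₀) / 2)) (c * (s' - s) / 4)) (min_le_left (δL / 2) ((y - x₀) / 2))]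
      linarith [hw.1]
    · exact absurd heq hwy
    · refine le_trans (min_le_right _ _) (hR w ⟨hgt, ?_⟩)
      have := lt_of_le_of_ne hw.2 hw2
      linarith
  have hTy₂ : T f x₀ y₂ ≤ ENNReal.ofReal s' := by
    have hx₁ : x₀ < y₁ := by
      have : η ≤ (y - x₀) / 2 :=
        le_trans (min_le_left _ _) (min_le_right _ _)
      linarith
    rw [T_add (le_of_lt hx₁) (by linarith)]
    have hub := lint_ub (c := y₁) (d := y₂) (by linarith) hc0 hae
    calc T f x₀ y₁ + ∫⁻ w in Set.Ioc y₁ y₂, ENNReal.ofReal (f w)⁻¹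
        ≤ ENNReal.ofReal s + ENNReal.ofReal ((y₂ - y₁) / c) := add_le_add hTy₁ hub
      _ ≤ ENNReal.ofReal s' := by
          rw [← ENNReal.ofReal_add (le_of_lt hs) (div_nonneg (by linarith) hc0.le)]
          apply ENNReal.ofReal_le_ofReal
          have h1 : y₂ - y ≤ c * (s' - s) / 4 :=
            sub_le_iff_le_add'.2 ((min_le_right _ _).trans (min_le_right _ _))
          have h2 : y - y₁ < η := by linarith
          have h3 : η ≤ c * (s' - s) / 4 := min_le_right _ _
          have h4 : (y₂ - y₁) / c ≤ (s' - s) / 2 := by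
            rw [div_le_iff₀ hc0]
            nlinarith
          linarith
  have := mem_le_sol hb hreg hnj hpos hy₂A hTy₂
  linarith

lemma stall_persists {s s' : ℝ}
    (hst : ∀ z ∈ A fl fr x₀, z ≤ sol f fl fr x₀ s) (hss' : s ≤ s') :
    sol f fl fr x₀ s' = sol f fl fr x₀ s :=
  le_antisymm (sol_le hb hreg hnj hpos (sol_ge hb hreg hnj hpos s)
    (fun y hy _ => hst y hy)) (sol_mono hb hreg hnj hpos hss')

lemma f_sSup_A_eq_zero (hA : BddAbove (A fl fr x₀)) : f (sSup (A fl fr x₀)) = 0 := by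
  obtain ⟨δ₀, hδ₀, hδ₀A, _⟩ := exists_init hreg hpos
  have hAne : (A fl fr x₀).Nonempty := ⟨x₀ + δ₀, hδ₀A⟩
  set b := sSup (A fl fr x₀) with hbdef
  have hxb : x₀ < b := lt_of_lt_of_le (by linarith) (le_csSup hA hδ₀A)
  have hgood : ∀ w, x₀ < w → w < b → 0 < fl w ∧ 0 < fr w := by
    intro w hw1 hw2
    obtain ⟨z, hzA, hwz⟩ := exists_lt_of_lt_csSup hAne hw2
    exact hzA.2 w hw1 hwz
  have hflb : 0 ≤ fl b := by
    by_contra hneg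
    push_neg at hneg
    obtain ⟨δ, hδ, hδ'⟩ := Metric.tendsto_nhdsWithin_nhds.1 (hreg b).1 (-fl b / 2)
      (by linarith)
    set lo := max (b - δ) x₀ with hlo
    have hlob : lo < b := max_lt (by linarith) hxb
    obtain ⟨z₀, hz₀A, hz₀⟩ := exists_lt_of_lt_csSup hAne hlob
    obtain ⟨B, hBc, hB⟩ := pos_off_countable hreg hnj hz₀A
    have hvol : volume (Set.Ioo lo z₀ \ B) ≠ 0 := by
      rw [MeasureTheory.measure_diff_null (hBc.measure_zero volume)]
      rw [Real.volume_Ioo]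
      simp only [ne_eq, ENNReal.ofReal_eq_zero, not_le]
      linarith
    obtain ⟨w, hw⟩ := MeasureTheory.nonempty_of_measure_ne_zero hvol
    have hwpos : 0 < f w := hB w ⟨lt_of_le_of_lt (le_max_right _ _) hw.1.1, hw.1.2⟩ hw.2
    have hwb : w < b := lt_of_lt_of_le hw.1.2 (le_csSup hA hz₀A)
    have := hδ' (Set.mem_Iio.2 hwb) (by
      rw [Real.dist_eq, abs_lt]
      constructor
      · have : b - δ ≤ lo := le_max_left _ _
        linarith [hw.1.1]
      · linarith)
    rw [Real.dist_eq, abs_lt] at this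
    linarith [this.2]
  have hnotboth : ¬(0 < fl b ∧ 0 < fr b) := by
    rintro ⟨hflb', hfrb⟩
    obtain ⟨δ, hδ, hR⟩ := right_bound hreg hfrb
    have hmem : b + δ / 2 ∈ A fl fr x₀ := by
      refine ⟨by linarith, fun w hw1 hw2 => ?_⟩
      rcases lt_trichotomy w b with hlt | rfl | hgt
      · exact hgood w hw1 hlt
      · exact ⟨hflb', hfrb⟩
      · have hl := limits_ge_of_interval hreg hR (w := w) ⟨hgt, by linarith⟩
        constructor <;> [linarith [hl.1]; linarith [hl.2]]
    have := le_csSup hA hmem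
    linarith
  rcases eq_or_lt_of_le hflb with heq | hflb'
  · exact hnj b (Or.inl (by rw [← heq, zero_mul]))
  rcases lt_trichotomy (fr b) 0 with hfr | hfr | hfr
  · exact hnj b (Or.inr ⟨hflb', hfr⟩)
  · exact hnj b (Or.inl (by rw [hfr, mul_zero]))
  · exact absurd ⟨hflb', hfr⟩ hnotboth

end Main2

section Main3

variable (hb : ∀ y, |f y| ≤ M) (hreg : Regulated f fl fr) (hnj : NoJamming f fl fr)
  (hpos : 0 < fr x₀)

include hb hreg hnj hpos

lemma T_sol_eq {s : ℝ} (hs : 0 < s)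
    (hz : ∃ z ∈ A fl fr x₀, sol f fl fr x₀ s < z)
    (hfleq : f (sol f fl fr x₀ s) = fl (sol f fl fr x₀ s))
    (hfveq : 0 < f (sol f fl fr x₀ s)) :
    T f x₀ (sol f fl fr x₀ s) = ENNReal.ofReal s := by
  set y := sol f fl fr x₀ s with hydef
  set v := f y with hvdef
  have hxy : x₀ < y := sol_pos hb hreg hnj hpos hs
  -- lower bound for f near y from the left
  obtain ⟨δ, hδ0, hδ⟩ := left_bound hreg (by rw [← hfleq]; exact hfveq)
  have hδ' : ∀ w ∈ Set.Ioc (y - δ) y, v / 2 ≤ f w := by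
    rintro w ⟨hw1, hw2⟩
    rcases eq_or_lt_of_le hw2 with rfl | hlt
    · linarith
    · have := hδ w ⟨hw1, hlt⟩; rw [← hfleq] at this; exact this
  refine le_antisymm ?_ (T_sol_ge hb hreg hnj hpos hs hz)
  refine ENNReal.le_of_forall_pos_le_add fun ε' hε' _ => ?_
  set η : ℝ := min (δ / 2) (min ((y - x₀) / 2) (v / 2 * ε' / 2)) with hη
  have hη0 : 0 < η := by
    refine lt_min (by linarith) (lt_min (by linarith) ?_)
    have : (0:ℝ) < ε' := hε'
    positivity
  obtain ⟨y₁, hy₁A, hTy₁, hy₁l, hy₁u⟩ := near_sol hb hreg hnj hpos (t := s) hxy hη0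
  have hx₁ : x₀ < y₁ := by
    have : η ≤ (y - x₀) / 2 := le_trans (min_le_right _ _) (min_le_left _ _)
    linarith
  have hae : ∀ᵐ w ∂(volume.restrict (Set.Ioc y₁ y)), v / 2 ≤ f w := by
    filter_upwards [MeasureTheory.ae_restrict_mem measurableSet_Ioc] with w hw
    refine hδ' w ⟨?_, hw.2⟩
    have : η ≤ δ / 2 := min_le_left _ _
    linarith [hw.1]
  have hub := lint_ub (c := y₁) (d := y) hy₁u (by linarith) hae
  rw [T_add (le_of_lt hx₁) hy₁u]
  calc T f x₀ y₁ + ∫⁻ w in Set.Ioc y₁ y, ENNReal.ofReal (f w)⁻¹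
      ≤ ENNReal.ofReal s + ENNReal.ofReal ((y - y₁) / (v / 2)) :=
        add_le_add hTy₁ hub
    _ ≤ ENNReal.ofReal s + ε' := by
        refine add_le_add_right ?_ _
        rw [← ENNReal.ofReal_coe_nnreal]
        apply ENNReal.ofReal_le_ofReal
        have h1 : y - y₁ < η := by linarith
        have h2 : η ≤ v / 2 * ε' / 2 := le_trans (min_le_right _ _) (min_le_right _ _)
        rw [div_le_iff₀ (by linarith)]
        nlinarith [NNReal.coe_pos.2 hε']

set_option maxHeartbeats 2000000 in
lemma good_deriv {s : ℝ} (hs : 0 < s)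
    (hz : ∃ z ∈ A fl fr x₀, sol f fl fr x₀ s < z)
    (hfleq : f (sol f fl fr x₀ s) = fl (sol f fl fr x₀ s))
    (hfreq : f (sol f fl fr x₀ s) = fr (sol f fl fr x₀ s)) :
    HasDerivAt (sol f fl fr x₀) (f (sol f fl fr x₀ s)) s := by
  obtain ⟨z, hzA, hyz⟩ := hz
  set y := sol f fl fr x₀ s with hydef
  set v := f y with hvdef
  have hxy : x₀ < y := sol_pos hb hreg hnj hpos hs
  have hflfr := hzA.2 y hxy hyz
  have hv0 : 0 < v := by rw [hfleq]; exact hflfr.1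
  have hTy : T f x₀ y = ENNReal.ofReal s :=
    T_sol_eq hb hreg hnj hpos hs ⟨z, hzA, hyz⟩ hfleq hv0
  -- two-sided bounds near y
  have hcont : ∀ ε, 0 < ε → ∃ δ > 0, ∀ w ∈ Set.Ioo (y - δ) (y + δ),
      v - ε ≤ f w ∧ f w ≤ v + ε := by
    intro ε hε
    obtain ⟨δ₁, hδ₁, h₁⟩ := Metric.tendsto_nhdsWithin_nhds.1 (hreg y).1 ε hε
    obtain ⟨δ₂, hδ₂, h₂⟩ := Metric.tendsto_nhdsWithin_nhds.1 (hreg y).2 ε hε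
    refine ⟨min δ₁ δ₂, lt_min hδ₁ hδ₂, fun w hw => ?_⟩
    rcases lt_trichotomy w y with hlt | rfl | hgt
    · have := h₁ hlt (by
        rw [Real.dist_eq, abs_lt]
        constructor <;> [linarith [hw.1, min_le_left δ₁ δ₂]; linarith])
      rw [Real.dist_eq, abs_lt, ← hfleq] at this
      constructor <;> linarith [this.1, this.2]
    · constructor <;> linarith
    · have := h₂ hgt (by
        rw [Real.dist_eq, abs_lt]
        constructor <;> [linarith; linarith [hw.2, min_le_right δ₁ δ₂]])
      rw [Real.dist_eq, abs_lt, ← hfreq] at this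
      constructor <;> linarith [this.1, this.2]
  rw [hasDerivAt_iff_tendsto_slope]
  rw [Metric.tendsto_nhdsWithin_nhds]
  intro ε₀ hε₀
  set ε : ℝ := min (ε₀ / 2) (v / 2) with hεdef
  have hε0 : 0 < ε := lt_min (by linarith) (by linarith)
  have hεv : ε ≤ v / 2 := min_le_right _ _
  have hεε₀ : ε ≤ ε₀ / 2 := min_le_left _ _
  obtain ⟨δ, hδ0, hδ⟩ := hcont (ε / 2) (by linarith)
  have hvε : (0:ℝ) < v + ε := by linarith
  set δt : ℝ := min (s / 2) (min (δ / (2 * (v + ε)))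
    (min ((z - y) / (2 * (v + ε))) ((y - x₀) / (2 * (v + ε))))) with hδtdef
  have hδt0 : 0 < δt := by
    refine lt_min (by linarith) (lt_min (by positivity) (lt_min ?_ ?_))
    · have : 0 < z - y := by linarith
      positivity
    · have : 0 < y - x₀ := by linarith
      positivity
  refine ⟨δt, hδt0, ?_⟩
  intro t' ht'ne ht'close
  have ht'ne' : t' ≠ s := ht'ne
  set h : ℝ := t' - s with hhdef
  have hhne : h ≠ 0 := sub_ne_zero.2 ht'ne'
  rw [Real.dist_eq] at ht'close
  have habs : |h| < δt := ht'close
  have hb1 : |h| * (v + ε) < δ / 2 := by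
    have h1 : δt ≤ δ / (2 * (v + ε)) := le_trans (min_le_right _ _) (min_le_left _ _)
    have h2 : |h| < δ / (2 * (v + ε)) := lt_of_lt_of_le habs h1
    calc |h| * (v + ε) < δ / (2 * (v + ε)) * (v + ε) := by
          apply mul_lt_mul_of_pos_right h2 hvε
      _ = δ / 2 := by field_simp
  have hb2 : |h| * (v + ε) < z - y := by
    have h1 : δt ≤ (z - y) / (2 * (v + ε)) :=
      le_trans (min_le_right _ _) (le_trans (min_le_right _ _) (min_le_left _ _))
    have h2 : |h| < (z - y) / (2 * (v + ε)) := lt_of_lt_of_le habs h1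
    have h3 : 0 < z - y := by linarith
    calc |h| * (v + ε) < (z - y) / (2 * (v + ε)) * (v + ε) :=
          mul_lt_mul_of_pos_right h2 hvε
      _ = (z - y) / 2 := by field_simp
      _ < z - y := by linarith
  have hb3 : |h| * (v + ε) < y - x₀ := by
    have h1 : δt ≤ (y - x₀) / (2 * (v + ε)) :=
      le_trans (min_le_right _ _) (le_trans (min_le_right _ _) (min_le_right _ _))
    have h2 : |h| < (y - x₀) / (2 * (v + ε)) := lt_of_lt_of_le habs h1
    have h3 : 0 < y - x₀ := by linarith
    calc |h| * (v + ε) < (y - x₀) / (2 * (v + ε)) * (v + ε) :=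
          mul_lt_mul_of_pos_right h2 hvε
      _ = (y - x₀) / 2 := by field_simp
      _ < y - x₀ := by linarith
  have ht'pos : 0 < t' := by
    have : δt ≤ s / 2 := min_le_left _ _
    have := abs_lt.1 habs
    simp only [hhdef] at this
    linarith [this.1]
  have hst' : ENNReal.ofReal t' = ENNReal.ofReal (s + h) := by
    congr 1; simp [hhdef]
  -- a.e. bounds on subintervals of (y - δ, y + δ)
  have haebnd : ∀ c d : ℝ, y - δ / 2 ≤ c → d ≤ y + δ / 2 →
      ∀ᵐ w ∂(volume.restrict (Set.Ioc c d)),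
        (v - ε / 2 ≤ f w) ∧ (0 < f w ∧ f w ≤ v + ε / 2) := by
    intro c d hc hd
    filter_upwards [MeasureTheory.ae_restrict_mem measurableSet_Ioc] with w hw
    have hmem : w ∈ Set.Ioo (y - δ) (y + δ) := by
      constructor
      · have := hw.1; linarith
      · have := hw.2; linarith
    obtain ⟨hw1, hw2⟩ := hδ w hmem
    exact ⟨hw1, ⟨by linarith, hw2⟩⟩
  -- key estimates
  have hq : |sol f fl fr x₀ t' - y - v * h| ≤ ε * |h| := by
    rcases hhne.lt_or_gt with hneg | hposh
    · -- h < 0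
      have habs' : |h| = -h := abs_of_neg hneg
      -- lower estimate: y + h * (v + ε) ≤ sol t'
      have hlow : y + h * (v + ε) ≤ sol f fl fr x₀ t' := by
        set ym : ℝ := y + h * (v + ε) with hym
        have hymlt : ym < y := by nlinarith
        have hymx₀ : x₀ < ym := by nlinarith [hb3, abs_of_neg hneg]
        have hymA : A fl fr x₀ ym := mem_A_of_le hzA hymx₀ (by linarith)
        have hymδ : y - δ / 2 ≤ ym := by nlinarith [hb1, abs_of_neg hneg]
        have hint := lint_lb (c := ym) (d := y) (hi := v + ε / 2) (by linarith)
          ((haebnd ym y hymδ (by linarith)).mono fun w hw => hw.2)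
        have hTsplit : T f x₀ y = T f x₀ ym +
            ∫⁻ w in Set.Ioc ym y, ENNReal.ofReal (f w)⁻¹ :=
          T_add (le_of_lt hymx₀) (le_of_lt hymlt)
        have hkey : T f x₀ ym + ENNReal.ofReal (-h) ≤
            ENNReal.ofReal t' + ENNReal.ofReal (-h) := by
          have h1 : ENNReal.ofReal (-h) ≤
              ∫⁻ w in Set.Ioc ym y, ENNReal.ofReal (f w)⁻¹ := by
            refine le_trans ?_ hint
            apply ENNReal.ofReal_le_ofReal
            rw [le_div_iff₀ (by linarith)]
            have : y - ym = -h * (v + ε) := by rw [hym]; ring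
            rw [this]
            nlinarith
          calc T f x₀ ym + ENNReal.ofReal (-h)
              ≤ T f x₀ ym + ∫⁻ w in Set.Ioc ym y, ENNReal.ofReal (f w)⁻¹ :=
                add_le_add_right h1 _
            _ = T f x₀ y := hTsplit.symm
            _ = ENNReal.ofReal s := hTy
            _ = ENNReal.ofReal (t' + -h) := by congr 1; simp [hhdef]
            _ = ENNReal.ofReal t' + ENNReal.ofReal (-h) :=
                ENNReal.ofReal_add (le_of_lt ht'pos) (by linarith)
        have hTym : T f x₀ ym ≤ ENNReal.ofReal t' :=
          (ENNReal.add_le_add_iff_right ENNReal.ofReal_ne_top).1 hkey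
        exact mem_le_sol hb hreg hnj hpos hymA hTym
      -- upper estimate: sol t' ≤ y + h * (v - ε)
      have hup : sol f fl fr x₀ t' ≤ y + h * (v - ε) := by
        refine sol_le hb hreg hnj hpos ?_ (fun y₁ hy₁A hT₁ => ?_)
        · nlinarith [hb3, abs_of_neg hneg]
        by_contra hgt
        push_neg at hgt
        rcases le_or_gt y y₁ with hge | hlt
        · -- y₁ ≥ y : T y₁ ≥ ofReal s > ofReal t'
          have h1 : ENNReal.ofReal s ≤ T f x₀ y₁ := hTy ▸ T_mono hge
          have h2 : ENNReal.ofReal t' < ENNReal.ofReal s := by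
            rw [ENNReal.ofReal_lt_ofReal_iff hs]
            linarith
          exact absurd (lt_of_le_of_lt (h1.trans hT₁) h2) (lt_irrefl _)
        · have hy₁δ : y - δ / 2 ≤ y₁ := by nlinarith [hb1, abs_of_neg hneg]
          have hx₁ : x₀ < y₁ := hy₁A.1
          have hint := lint_ub (c := y₁) (d := y) (lo := v - ε / 2)
            (le_of_lt hlt) (by linarith)
            ((haebnd y₁ y hy₁δ (by linarith)).mono fun w hw => hw.1)
          have hTsplit : T f x₀ y = T f x₀ y₁ +
              ∫⁻ w in Set.Ioc y₁ y, ENNReal.ofReal (f w)⁻¹ :=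
            T_add (le_of_lt hx₁) (le_of_lt hlt)
          have hchain : ENNReal.ofReal s ≤
              ENNReal.ofReal (t' + (y - y₁) / (v - ε / 2)) := by
            calc ENNReal.ofReal s = T f x₀ y := hTy.symm
              _ = T f x₀ y₁ + ∫⁻ w in Set.Ioc y₁ y, ENNReal.ofReal (f w)⁻¹ := hTsplit
              _ ≤ ENNReal.ofReal t' + ENNReal.ofReal ((y - y₁) / (v - ε / 2)) :=
                  add_le_add hT₁ hint
              _ = ENNReal.ofReal (t' + (y - y₁) / (v - ε / 2)) :=
                  (ENNReal.ofReal_add (le_of_lt ht'pos)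
                    (div_nonneg (by linarith) (by linarith))).symm
          rw [ENNReal.ofReal_le_ofReal_iff (add_nonneg (le_of_lt ht'pos)
            (div_nonneg (by linarith) (by linarith)))] at hchain
          · have hq1 : y - y₁ < -h * (v - ε) := by nlinarith
            have hq2 : (y - y₁) / (v - ε / 2) < -h := by
              rw [div_lt_iff₀ (by linarith)]
              nlinarith
            simp only [hhdef] at hchain hq2
            linarith
      rw [abs_le]
      constructor
      · nlinarith [hlow, abs_of_neg hneg]
      · nlinarith [hup, abs_of_neg hneg]
    · -- h > 0
      have habs' : |h| = h := abs_of_pos hposh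
      -- lower estimate
      have hlow : y + h * (v - ε) ≤ sol f fl fr x₀ t' := by
        set y' : ℝ := y + h * (v - ε) with hy'
        have hyy' : y < y' := by nlinarith
        have hy'z : y' < z := by nlinarith [hb2, abs_of_pos hposh]
        have hy'A : A fl fr x₀ y' := mem_A_of_le hzA (by linarith) (le_of_lt hy'z)
        have hy'δ : y' ≤ y + δ / 2 := by nlinarith [hb1, abs_of_pos hposh]
        have hint := lint_ub (c := y) (d := y') (lo := v - ε / 2)
          (le_of_lt hyy') (by linarith)
          ((haebnd y y' (by linarith) hy'δ).mono fun w hw => hw.1)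
        have hT' : T f x₀ y' ≤ ENNReal.ofReal t' := by
          rw [T_add (le_of_lt hxy) (le_of_lt hyy'), hTy, hst']
          calc ENNReal.ofReal s + ∫⁻ w in Set.Ioc y y', ENNReal.ofReal (f w)⁻¹
              ≤ ENNReal.ofReal s + ENNReal.ofReal ((y' - y) / (v - ε / 2)) :=
                add_le_add_right hint _
            _ ≤ ENNReal.ofReal (s + h) := by
                rw [← ENNReal.ofReal_add (le_of_lt hs)
                  (div_nonneg (by nlinarith) (by linarith))]
                apply ENNReal.ofReal_le_ofReal
                have : y' - y = h * (v - ε) := by rw [hy']; ring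
                rw [this]
                have : h * (v - ε) / (v - ε / 2) ≤ h := by
                  rw [div_le_iff₀ (by linarith)]
                  nlinarith
                linarith
        exact mem_le_sol hb hreg hnj hpos hy'A hT'
      -- upper estimate
      have hup : sol f fl fr x₀ t' ≤ y + h * (v + ε) := by
        refine sol_le hb hreg hnj hpos (by nlinarith) (fun y₁ hy₁A hT₁ => ?_)
        by_contra hgt
        push_neg at hgt
        set yp : ℝ := y + h * (v + ε) with hyp
        have hyyp : y < yp := by nlinarith
        have hypδ : yp ≤ y + δ / 2 := by nlinarith [hb1, abs_of_pos hposh]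
        have hint := lint_lb (c := y) (d := yp) (hi := v + ε / 2) (by linarith)
          ((haebnd y yp (by linarith) hypδ).mono fun w hw => hw.2)
        have hTsplit : T f x₀ yp = T f x₀ y +
            ∫⁻ w in Set.Ioc y yp, ENNReal.ofReal (f w)⁻¹ :=
          T_add (le_of_lt hxy) (le_of_lt hyyp)
        have hky : ENNReal.ofReal (s + h * (v + ε) / (v + ε / 2)) ≤ T f x₀ y₁ := by
          calc ENNReal.ofReal (s + h * (v + ε) / (v + ε / 2))
              = ENNReal.ofReal s + ENNReal.ofReal (h * (v + ε) / (v + ε / 2)) :=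
                ENNReal.ofReal_add (le_of_lt hs) (by positivity)
            _ ≤ T f x₀ y + ∫⁻ w in Set.Ioc y yp, ENNReal.ofReal (f w)⁻¹ := by
                refine add_le_add (le_of_eq hTy.symm) (le_trans ?_ hint)
                apply ENNReal.ofReal_le_ofReal
                have : yp - y = h * (v + ε) := by rw [hyp]; ring
                rw [this]
            _ = T f x₀ yp := hTsplit.symm
            _ ≤ T f x₀ y₁ := T_mono (le_of_lt hgt)
        have hlt2 : ENNReal.ofReal t' < ENNReal.ofReal (s + h * (v + ε) / (v + ε / 2)) := by
          rw [ENNReal.ofReal_lt_ofReal_iff]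
          · have : h < h * (v + ε) / (v + ε / 2) := by
              rw [lt_div_iff₀ (by linarith)]
              nlinarith
            simp only [hhdef]
            linarith
          · have : 0 < h * (v + ε) / (v + ε / 2) := by positivity
            linarith
        exact absurd (hT₁.trans_lt (lt_of_lt_of_le hlt2 hky)) (lt_irrefl _)
      rw [abs_le]
      constructor
      · nlinarith [hlow, abs_of_pos hposh]
      · nlinarith [hup, abs_of_pos hposh]
  -- conclude
  have hslope : slope (sol f fl fr x₀) s t' =
      (sol f fl fr x₀ t' - y) / h := by
    rw [slope_def_field]
  rw [Real.dist_eq, hslope]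
  have habs0 : 0 < |h| := abs_pos.2 hhne
  have : (sol f fl fr x₀ t' - y) / h - v =
      (sol f fl fr x₀ t' - y - v * h) / h := by
    field_simp
  rw [this, abs_div]
  rw [div_lt_iff₀ habs0]
  calc |sol f fl fr x₀ t' - y - v * h| ≤ ε * |h| := hq
    _ < ε₀ * |h| := by
        apply mul_lt_mul_of_pos_right _ habs0
        linarith

end Main3

section Main4

variable (hb : ∀ y, |f y| ≤ M) (hreg : Regulated f fl fr) (hnj : NoJamming f fl fr)
  (hpos : 0 < fr x₀)

include hb hreg hnj hpos

lemma sol_continuousOn : ContinuousOn (sol f fl fr x₀) (Set.Ici 0) := by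
  have hM := M_pos hb hreg hpos
  refine LipschitzOnWith.continuousOn (K := Real.toNNReal M)
    (LipschitzOnWith.of_dist_le_mul fun s hs u hu => ?_)
  have key : ∀ p q : ℝ, 0 ≤ p → p ≤ q →
      dist (sol f fl fr x₀ q) (sol f fl fr x₀ p) ≤ M * (q - p) := by
    intro p q hp hpq
    rw [Real.dist_eq, abs_of_nonneg (sub_nonneg.2 (sol_mono hb hreg hnj hpos hpq))]
    have := sol_lipschitz hb hreg hnj hpos hp hpq
    linarith
  have hMc : (Real.toNNReal M : ℝ) = M := Real.coe_toNNReal M hM.le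
  rcases le_total s u with h | h
  · rw [dist_comm]
    calc dist (sol f fl fr x₀ u) (sol f fl fr x₀ s) ≤ M * (u - s) := key s u hs h
      _ = ↑(Real.toNNReal M) * dist s u := by
          rw [hMc, Real.dist_eq, abs_of_nonpos (by linarith)]; ring
  · calc dist (sol f fl fr x₀ s) (sol f fl fr x₀ u) ≤ M * (s - u) := key u s hu h
      _ = ↑(Real.toNNReal M) * dist s u := by
          rw [hMc, Real.dist_eq, abs_of_nonneg (by linarith)]

lemma right_case :
    ∀ t, 0 ≤ t → sol f fl fr x₀ t = x₀ + ∫ s in (0:ℝ)..t, f (sol f fl fr x₀ s) := by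
  intro t ht
  have hsol0 : sol f fl fr x₀ 0 = x₀ := sol_nonpos hb hreg hnj hpos le_rfl
  rcases eq_or_lt_of_le ht with rfl | ht0
  · rw [intervalIntegral.integral_same, hsol0, add_zero]
  have hD := regulated_countable_bad f fl fr hreg
  set Dbad := {y : ℝ | f y ≠ fl y ∨ f y ≠ fr y} with hDdef
  set K := {s : ℝ | 0 ≤ s ∧ ∀ z ∈ A fl fr x₀, z ≤ sol f fl fr x₀ s} with hKdef
  set E := {s : ℝ | 0 < s ∧ (∃ z ∈ A fl fr x₀, sol f fl fr x₀ s < z) ∧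
    sol f fl fr x₀ s ∈ Dbad} with hEdef
  have hEcount : E.Countable := by
    refine countable_of_injective_of_countable_image ?_
      (hD.mono (Set.image_subset_iff.2 fun s hs => Set.mem_preimage.2 hs.2.2))
    intro s hs u hu hsu
    by_contra hne
    rcases lt_or_gt_of_ne hne with hlt | hgt
    · exact absurd hsu (ne_of_lt (sol_lt_sol hb hreg hnj hpos hs.1 hlt hs.2.1))
    · exact absurd hsu.symm (ne_of_lt (sol_lt_sol hb hreg hnj hpos hu.1 hgt hu.2.1))
  set C : Set ℝ := E ∪ {sInf K} with hCdef
  have hCcount : C.Countable := hEcount.union (Set.countable_singleton _)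
  have Hd : ∀ s ∈ Set.Ioo 0 t \ C, HasDerivAt (sol f fl fr x₀) (f (sol f fl fr x₀ s)) s := by
    rintro s ⟨hs, hsC⟩
    by_cases hzz : ∃ z ∈ A fl fr x₀, sol f fl fr x₀ s < z
    · have hnd : sol f fl fr x₀ s ∉ Dbad := fun hd =>
        hsC (Or.inl ⟨hs.1, hzz, hd⟩)
      rw [hDdef, Set.mem_setOf_eq, not_or, not_ne_iff, not_ne_iff] at hnd
      exact good_deriv hb hreg hnj hpos hs.1 hzz hnd.1 hnd.2
    · push_neg at hzz
      have hsK : s ∈ K := ⟨le_of_lt hs.1, hzz⟩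
      have hKbdd : BddBelow K := ⟨0, fun k hk => hk.1⟩
      have hne : s ≠ sInf K := fun h => hsC (Or.inr (by rw [h]; rfl))
      have hlt : sInf K < s := lt_of_le_of_ne (csInf_le hKbdd hsK) (Ne.symm hne)
      obtain ⟨s₀, hs₀K, hs₀lt⟩ := exists_lt_of_csInf_lt ⟨s, hsK⟩ hlt
      have hconst : ∀ u, s₀ ≤ u → sol f fl fr x₀ u = sol f fl fr x₀ s₀ :=
        fun u hu => stall_persists hb hreg hnj hpos hs₀K.2 hu
      -- value is sSup A and f there is 0
      obtain ⟨δ₀, hδ₀, hδ₀A, _⟩ := exists_init hreg hpos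
      have hAbdd : BddAbove (A fl fr x₀) := ⟨sol f fl fr x₀ s₀, fun z hz => hs₀K.2 z hz⟩
      have hbval : sol f fl fr x₀ s₀ = sSup (A fl fr x₀) := by
        refine le_antisymm ?_ (csSup_le ⟨x₀ + δ₀, hδ₀A⟩ (fun z hz => hs₀K.2 z hz))
        refine sol_le hb hreg hnj hpos ?_ (fun y hy _ => le_csSup hAbdd hy)
        calc x₀ ≤ x₀ + δ₀ := by linarith
          _ ≤ sSup (A fl fr x₀) := le_csSup hAbdd hδ₀A
      have hfz : f (sol f fl fr x₀ s) = 0 := by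
        rw [hconst s (le_of_lt hs₀lt), hbval]
        exact f_sSup_A_eq_zero hb hreg hnj hpos hAbdd
      rw [hfz]
      have heq : sol f fl fr x₀ =ᶠ[nhds s] (fun _ => sol f fl fr x₀ s₀) := by
        filter_upwards [Ioi_mem_nhds hs₀lt] with u hu
        exact hconst u (le_of_lt hu)
      exact (Filter.EventuallyEq.hasDerivAt_iff heq).2 (hasDerivAt_const _ _)
  have Hc : ContinuousOn (sol f fl fr x₀) (Set.Icc 0 t) :=
    (sol_continuousOn hb hreg hnj hpos).mono (fun u hu => hu.1)
  have Hae : (fun s => f (sol f fl fr x₀ s)) =ᵐ[volume.restrict (Set.Ioc 0 t)]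
      deriv (sol f fl fr x₀) := by
    have hnull : volume (C ∪ {t}) = 0 :=
      measure_union_null (hCcount.measure_zero volume) (measure_singleton t)
    filter_upwards [MeasureTheory.ae_restrict_mem measurableSet_Ioc,
      MeasureTheory.ae_restrict_of_ae
        (MeasureTheory.measure_eq_zero_iff_ae_notMem.1 hnull)] with s hs hs'
    have hst : s < t := lt_of_le_of_ne hs.2 (fun h => hs' (Or.inr h))
    exact (Hd s ⟨⟨hs.1, hst⟩, fun h => hs' (Or.inl h)⟩).deriv.symm
  have Hi : IntervalIntegrable (fun s => f (sol f fl fr x₀ s)) volume 0 t := by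
    rw [intervalIntegrable_iff_integrableOn_Ioc_of_le ht]
    have hmeas : AEStronglyMeasurable (fun s => f (sol f fl fr x₀ s))
        (volume.restrict (Set.Ioc 0 t)) :=
      ((measurable_deriv (sol f fl fr x₀)).aestronglyMeasurable).congr Hae.symm
    refine MeasureTheory.Integrable.mono'
      (MeasureTheory.integrable_const M) hmeas ?_
    exact Filter.Eventually.of_forall fun s => by
      rw [Real.norm_eq_abs]; exact hb _
  have := MeasureTheory.integral_eq_of_hasDerivAt_off_countable_of_le
    (sol f fl fr x₀) (fun s => f (sol f fl fr x₀ s)) ht hCcount Hc Hd Hi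
  rw [this, hsol0]
  ring

end Main4

end

end Cara


theorem mirror_case (f : ℝ → ℝ) (M : ℝ) (hb : ∀ y : ℝ, |f y| ≤ M)
    (fl fr : ℝ → ℝ) (hreg : Regulated f fl fr) (hnj : NoJamming f fl fr)
    (x₀ : ℝ) (hfl : fl x₀ < 0) :
    ∃ x : ℝ → ℝ, ∀ t : ℝ, 0 ≤ t → x t = x₀ + ∫ s in (0:ℝ)..t, f (x s) := by
  set g : ℝ → ℝ := fun y => -f (-y) with hg
  set gl : ℝ → ℝ := fun y => -fr (-y) with hgl
  set gr : ℝ → ℝ := fun y => -fl (-y) with hgr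
  have hgb : ∀ y, |g y| ≤ M := fun y => by
    rw [hg]; simpa [abs_neg] using hb (-y)
  have hmapl : ∀ y : ℝ, Filter.Tendsto (fun z : ℝ => -z)
      (nhdsWithin y (Set.Iio y)) (nhdsWithin (-y) (Set.Ioi (-y))) := by
    intro y
    apply Filter.Tendsto.inf (Continuous.tendsto continuous_neg y)
    rw [Filter.tendsto_principal_principal]
    intro z hz
    simpa using hz
  have hmapr : ∀ y : ℝ, Filter.Tendsto (fun z : ℝ => -z)
      (nhdsWithin y (Set.Ioi y)) (nhdsWithin (-y) (Set.Iio (-y))) := by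
    intro y
    apply Filter.Tendsto.inf (Continuous.tendsto continuous_neg y)
    rw [Filter.tendsto_principal_principal]
    intro z hz
    simpa using hz
  have hgreg : Regulated g gl gr := by
    intro y
    constructor
    · have h1 := ((hreg (-y)).2.comp (hmapl y)).neg
      simpa [hg, hgl, Function.comp_def] using h1
    · have h1 := ((hreg (-y)).1.comp (hmapr y)).neg
      simpa [hg, hgr, Function.comp_def] using h1
  have hgnj : NoJamming g gl gr := by
    intro y hy
    have hf : f (-y) = 0 := by
      apply hnj (-y)
      rcases hy with h | ⟨h1, h2⟩
      · left
        simp only [hgl, hgr] at h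
        nlinarith [h]
      · right
        simp only [hgl, hgr] at h1 h2
        constructor <;> nlinarith
    simp [hg, hf]
  have hgpos : 0 < gr (-x₀) := by
    simp only [hgr, neg_neg]
    linarith
  have hy := Cara.right_case hgb hgreg hgnj hgpos
  set y : ℝ → ℝ := Cara.sol g gl gr (-x₀) with hydef
  refine ⟨fun t => -y t, fun t ht => ?_⟩
  have h1 := hy t ht
  have h3 : (∫ s in (0:ℝ)..t, g (y s)) = -∫ s in (0:ℝ)..t, f (-(y s)) := by
    rw [← intervalIntegral.integral_neg]
  rw [h3] at h1
  have h4 : -y t = x₀ + ∫ s in (0:ℝ)..t, f (-(y s)) := by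
    rw [h1]; ring
  simpa using h4

theorem existence_main
    (f : ℝ → ℝ) (M : ℝ) (hb : ∀ y : ℝ, |f y| ≤ M)
    (fl fr : ℝ → ℝ) (hreg : Regulated f fl fr) (hnj : NoJamming f fl fr)
    (x₀ : ℝ) :
    ∃ x : ℝ → ℝ, ∀ t : ℝ, 0 ≤ t → x t = x₀ + ∫ s in (0:ℝ)..t, f (x s) := by
  by_cases hfr : 0 < fr x₀
  · exact ⟨Cara.sol f fl fr x₀, Cara.right_case hb hreg hnj hfr⟩
  by_cases hfl : fl x₀ < 0
  · exact mirror_case f M hb fl fr hreg hnj x₀ hfl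
  · push_neg at hfr hfl
    have hf0 : f x₀ = 0 := by
      rcases eq_or_lt_of_le hfl with h | h
      · exact hnj x₀ (Or.inl (by rw [← h, zero_mul]))
      rcases eq_or_lt_of_le hfr with h2 | h2
      · exact hnj x₀ (Or.inl (by rw [h2, mul_zero]))
      · exact hnj x₀ (Or.inr ⟨h, h2⟩)
    refine ⟨fun _ => x₀, fun t ht => ?_⟩
    simp [hf0]

/-- For every initial point there exists a globally defined Carathéodory solution
of `ẋ = f(x)`, `x(0) = x₀`. -/
theorem existence_of_caratheodory_solution
    (f : ℝ → ℝ) (M : ℝ) (hb : ∀ y : ℝ, |f y| ≤ M)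
    (fl fr : ℝ → ℝ) (hreg : Regulated f fl fr) (hnj : NoJamming f fl fr)
    (x₀ : ℝ) :
    ∃ x : ℝ → ℝ, ∀ t : ℝ, 0 ≤ t → x t = x₀ + ∫ s in (0:ℝ)..t, f (x s) :=
  existence_main f M hb fl fr hreg hnj x₀
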